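/- For every integer m > 1, the commutator subgroup of the group Ex_m is exactly the two-element set {(0,0,+1), (0,0,−1)}, where 0 denotes the zero vector in (ℤ/2ℤ)^m. -/

import Mathlib

open Finset

/-- The excess group `Ex_m`: triples `(v, h, ε)` with `v, h ∈ (ℤ/2ℤ)^m`,
`ε ∈ {±1}` (realized as `ℤˣ`), and the coordinates of `v` summing to `0`. -/
@[ext]
structure Ex (m : ℕ) where
  v : Fin m → ZMod 2
  h : Fin m → ZMod 2
  ε : ℤˣ
  hv : ∑ i, v i = 0

namespace Ex

variable {m : ℕ}

/-- The exponent of `(−1)` in the product `(v,h,ε)·(v',h',ε')`: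
`Σ_{1≤i<j≤m} v_j (v'_i + h'_i) + Σ_{1≤i≤j≤m} v'_j h_i`, computed from the
representatives in `{0,1}` of the `ℤ/2ℤ`-coordinates. -/
def expo (x y : Ex m) : ℕ :=
  (∑ p ∈ Finset.univ.filter (fun p : Fin m × Fin m => p.1 < p.2),
      (x.v p.2).val * ((y.v p.1).val + (y.h p.1).val)) +
  ∑ p ∈ Finset.univ.filter (fun p : Fin m × Fin m => p.1 ≤ p.2),
      (y.v p.2).val * (x.h p.1).val

/-- The multiplication of `Ex_m`:
`(v,h,ε)·(v',h',ε') = (v+v', h+h', ε ε' (−1)^{Σ_{i<j} v_j(v'_i+h'_i) + Σ_{i≤j} v'_j h_i})`. -/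
def mul' (x y : Ex m) : Ex m :=
  ⟨x.v + y.v, x.h + y.h, x.ε * y.ε * (-1) ^ expo x y, by
    simp [Finset.sum_add_distrib, x.hv, y.hv]⟩

/-- The identity element `(0, 0, +1)` of `Ex_m`. -/
def one' : Ex m := ⟨0, 0, 1, by simp⟩

/-- The element `(0, 0, −1)` of `Ex_m`. -/
def negOne' : Ex m := ⟨0, 0, -1, by simp⟩

/-- Inversion in `Ex_m`. -/
def inv' (x : Ex m) : Ex m := ⟨x.v, x.h, x.ε * (-1) ^ expo x x, x.hv⟩

-- auxiliary: the ZMod-2-valued bilinear form underlying `expo`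
private def Bf (a b c d : Fin m → ZMod 2) : ZMod 2 :=
  (∑ p ∈ Finset.univ.filter (fun p : Fin m × Fin m => p.1 < p.2),
      a p.2 * (c p.1 + d p.1)) +
  ∑ p ∈ Finset.univ.filter (fun p : Fin m × Fin m => p.1 ≤ p.2),
      c p.2 * b p.1

private def χ (a : ZMod 2) : ℤˣ := (-1) ^ a.val

private lemma χ_add : ∀ a b : ZMod 2, χ (a + b) = χ a * χ b := by decide

private lemma val_cast : ∀ a : ZMod 2, ((a.val : ℕ) : ZMod 2) = a := by decide

private lemma neg_one_pow_nat (s : ℕ) : ((-1 : ℤˣ)) ^ s = χ ((s : ZMod 2)) := by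
  induction s with
  | zero => simp [χ]
  | succ k ih =>
      rw [pow_succ, ih]
      have hc : ((k + 1 : ℕ) : ZMod 2) = ((k : ℕ) : ZMod 2) + 1 := by push_cast; ring
      have hx : ∀ a : ZMod 2, χ (a + 1) = χ a * (-1) := by decide
      rw [hc, hx]

private lemma expo_cast (x y : Ex m) :
    ((expo x y : ℕ) : ZMod 2) = Bf x.v x.h y.v y.h := by
  unfold expo Bf
  push_cast
  simp [val_cast]

private lemma sign_eq (x y : Ex m) :
    ((-1 : ℤˣ)) ^ expo x y = χ (Bf x.v x.h y.v y.h) := by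
  rw [neg_one_pow_nat, expo_cast]

private lemma Bf_add_left (a b a' b' c d : Fin m → ZMod 2) :
    Bf (a + a') (b + b') c d = Bf a b c d + Bf a' b' c d := by
  unfold Bf
  simp only [Pi.add_apply, add_mul, mul_add, Finset.sum_add_distrib]
  ring

private lemma Bf_add_right (a b c d c' d' : Fin m → ZMod 2) :
    Bf a b (c + c') (d + d') = Bf a b c d + Bf a b c' d' := by
  unfold Bf
  simp only [Pi.add_apply, add_mul, mul_add, Finset.sum_add_distrib]
  ring

private lemma Bf_zero_left (c d : Fin m → ZMod 2) : Bf 0 0 c d = 0 := by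
  unfold Bf; simp

private lemma Bf_zero_right (a b : Fin m → ZMod 2) : Bf a b 0 0 = 0 := by
  unfold Bf; simp

instance : Group (Ex m) where
  mul := mul'
  one := one'
  inv := inv'
  mul_assoc a b c := by
    refine Ex.ext ?_ ?_ ?_
    · show (a.v + b.v) + c.v = a.v + (b.v + c.v)
      exact add_assoc _ _ _
    · show (a.h + b.h) + c.h = a.h + (b.h + c.h)
      exact add_assoc _ _ _
    · show (a.ε * b.ε * (-1) ^ expo a b) * c.ε * (-1) ^ expo (mul' a b) c =
        a.ε * (b.ε * c.ε * (-1) ^ expo b c) * (-1) ^ expo a (mul' b c)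
      rw [sign_eq, sign_eq, sign_eq, sign_eq]
      have h1 : (mul' a b).v = a.v + b.v := rfl
      have h2 : (mul' a b).h = a.h + b.h := rfl
      have h3 : (mul' b c).v = b.v + c.v := rfl
      have h4 : (mul' b c).h = b.h + c.h := rfl
      rw [h1, h2, h3, h4, Bf_add_left, Bf_add_right, χ_add, χ_add]
      simp only [mul_assoc, mul_comm, mul_left_comm]
  one_mul a := by
    refine Ex.ext ?_ ?_ ?_
    · show 0 + a.v = a.v
      exact zero_add _
    · show 0 + a.h = a.h
      exact zero_add _
    · show 1 * a.ε * (-1) ^ expo (one' : Ex m) a = a.ε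
      have h0 : expo (one' : Ex m) a = 0 := by simp [expo, one']
      rw [h0]; simp
  mul_one a := by
    refine Ex.ext ?_ ?_ ?_
    · show a.v + 0 = a.v
      exact add_zero _
    · show a.h + 0 = a.h
      exact add_zero _
    · show a.ε * 1 * (-1) ^ expo a (one' : Ex m) = a.ε
      have h0 : expo a (one' : Ex m) = 0 := by simp [expo, one']
      rw [h0]; simp
  inv_mul_cancel a := by
    refine Ex.ext ?_ ?_ ?_
    · show a.v + a.v = 0
      funext i
      exact CharTwo.add_self_eq_zero _
    · show a.h + a.h = 0
      funext i
      exact CharTwo.add_self_eq_zero _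
    · show (a.ε * (-1) ^ expo a a) * a.ε * (-1) ^ expo (inv' a) a = 1
      have he : expo (inv' a) a = expo a a := rfl
      rw [he]
      have h1 : a.ε * a.ε = 1 := Int.units_mul_self a.ε
      have h2 : ((-1 : ℤˣ)) ^ expo a a * (-1) ^ expo a a = 1 :=
        Int.units_mul_self _
      calc (a.ε * (-1) ^ expo a a) * a.ε * (-1) ^ expo a a
          = (a.ε * a.ε) * ((-1) ^ expo a a * (-1) ^ expo a a) := by
            simp only [mul_assoc, mul_comm, mul_left_comm]
        _ = 1 := by rw [h1, h2, one_mul]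

lemma mul_def (x y : Ex m) : x * y = mul' x y := rfl
lemma one_def : (1 : Ex m) = one' := rfl

lemma expo_negOne_left (z : Ex m) : expo (negOne' : Ex m) z = 0 := by
  unfold expo negOne'
  simp

lemma single_prod_sum (P : Fin m × Fin m → Prop) [DecidablePred P] (a b : Fin m) :
    ∑ p ∈ Finset.univ.filter P,
        (Pi.single b 1 : Fin m → ZMod 2) p.2 * (Pi.single a 1 : Fin m → ZMod 2) p.1
      = if P (a, b) then 1 else 0 := by
  classical
  have hterm : ∀ p : Fin m × Fin m,
      (Pi.single b 1 : Fin m → ZMod 2) p.2 * (Pi.single a 1 : Fin m → ZMod 2) p.1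
        = if p = (a, b) then 1 else 0 := by
    rintro ⟨x, y⟩
    by_cases hx : x = a <;> by_cases hy : y = b <;>
      simp [hx, hy, Pi.single_apply, Prod.ext_iff]
  rw [Finset.sum_congr rfl (fun p _ => hterm p)]
  simp [Finset.sum_ite_eq', Finset.mem_filter]

end Ex

open scoped commutatorElement
open Ex in
/-- For every integer `m > 1`, the commutator subgroup of the
group `Ex_m` is exactly the two-element set `{(0,0,+1), (0,0,−1)}`. -/
theorem ex_commutator (m : ℕ) (hm : 1 < m) :
    (commutator (Ex m) : Set (Ex m)) = {Ex.one', Ex.negOne'} := by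
  classical
  have him : (0 : ℕ) < m := by omega
  apply Set.eq_of_subset_of_subset
  · -- every commutator has zero vector components
    intro g hg
    let φ : Ex m →* Multiplicative ((Fin m → ZMod 2) × (Fin m → ZMod 2)) :=
      { toFun := fun z => Multiplicative.ofAdd (z.v, z.h)
        map_one' := rfl
        map_mul' := fun a b => rfl }
    have hker : g ∈ φ.ker := Abelianization.commutator_subset_ker φ hg
    have h1 : (g.v, g.h) = (0, 0) := by
      have h2 : φ g = 1 := MonoidHom.mem_ker.mp hker
      have h3 : Multiplicative.ofAdd ((g.v, g.h)) = Multiplicative.ofAdd ((0, 0)) := h2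
      exact Multiplicative.ofAdd.injective h3
    have hv : g.v = 0 := congrArg Prod.fst h1
    have hh : g.h = 0 := congrArg Prod.snd h1
    rcases Int.units_eq_one_or g.ε with hε | hε
    · left; exact Ex.ext hv hh hε
    · right; exact Ex.ext hv hh hε
  · -- one' and negOne' are in the commutator subgroup
    intro g hg
    rcases hg with hg | hg
    · subst hg
      rw [show (Ex.one' : Ex m) = 1 from rfl]
      exact one_mem _
    · subst hg
      -- explicit elements whose commutator is negOne'
      set i0 : Fin m := ⟨0, him⟩ with hi0
      set i1 : Fin m := ⟨1, hm⟩ with hi1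
      have hlt : i0 < i1 := by simp [hi0, hi1, Fin.lt_def]
      have hle0 : i0 ≤ i0 := le_refl _
      have hle1 : i0 ≤ i1 := le_of_lt hlt
      have hsingle : ∀ a : Fin m, ∑ i, (Pi.single a 1 : Fin m → ZMod 2) i = 1 :=
        fun a => by simp
      let x : Ex m := ⟨Pi.single i0 1 + Pi.single i1 1, 0, 1, by
        simp only [Pi.add_apply]
        rw [Finset.sum_add_distrib, hsingle, hsingle]
        decide⟩
      let y : Ex m := ⟨0, Pi.single i0 1, 1, by simp⟩
      have hBxy : Ex.Bf x.v x.h y.v y.h = 1 := by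
        show Ex.Bf (Pi.single i0 1 + Pi.single i1 1) 0 0 (Pi.single i0 1) = 1
        unfold Ex.Bf
        simp only [Pi.add_apply, Pi.zero_apply, zero_add, add_mul, mul_zero,
          zero_mul, Finset.sum_const_zero, add_zero, Finset.sum_add_distrib,
          Ex.single_prod_sum]
        rw [if_pos hlt, if_neg (lt_irrefl i0)]
        ring
      have hByx : Ex.Bf y.v y.h x.v x.h = 0 := by
        show Ex.Bf 0 (Pi.single i0 1) (Pi.single i0 1 + Pi.single i1 1) 0 = 0
        unfold Ex.Bf
        simp only [Pi.add_apply, Pi.zero_apply, zero_add, add_zero, add_mul,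
          mul_zero, zero_mul, Finset.sum_const_zero, Finset.sum_add_distrib,
          Ex.single_prod_sum]
        rw [if_pos hle0, if_pos hle1]
        decide
      have hsx : ((-1 : ℤˣ)) ^ Ex.expo x y = -1 := by
        rw [Ex.sign_eq, hBxy]; decide
      have hsy : ((-1 : ℤˣ)) ^ Ex.expo y x = 1 := by
        rw [Ex.sign_eq, hByx]; decide
      have key : x * y = Ex.negOne' * (y * x) := by
        rw [Ex.mul_def, Ex.mul_def, Ex.mul_def]
        refine Ex.ext ?_ ?_ ?_
        · show (Pi.single i0 1 + Pi.single i1 1 : Fin m → ZMod 2) + 0 =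
            0 + (0 + (Pi.single i0 1 + Pi.single i1 1))
          simp
        · show (0 : Fin m → ZMod 2) + Pi.single i0 1 =
            0 + (Pi.single i0 1 + 0)
          simp
        · show x.ε * y.ε * (-1) ^ Ex.expo x y =
            Ex.negOne'.ε * (y.ε * x.ε * (-1) ^ Ex.expo y x) *
              (-1) ^ Ex.expo Ex.negOne' (Ex.mul' y x)
          rw [Ex.expo_negOne_left, hsx, hsy]
          show (1 : ℤˣ) * 1 * (-1) = (-1) * (1 * 1 * 1) * (-1) ^ 0
          decide
      have hcomm : ⁅x, y⁆ = Ex.negOne' := by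
        rw [commutatorElement_def, mul_assoc, ← mul_inv_rev, key, mul_assoc,
          mul_inv_cancel, mul_one]
      rw [← hcomm]
      exact Subgroup.commutator_mem_commutator (Subgroup.mem_top x)
        (Subgroup.mem_top y)
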